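/- Let ψ_n, ψ_0 : [−C,C] → ℝ (n ≥ 1) be piecewise constant càdlàg functions, ψ_n(t) = Σ_{k∈ℤ} V_{n,k} 1{a_{n,k} ≤ t < a_{n,k+1}} with jump locations ⋯ < a_{n,−1} < a_{n,0} = 0 < a_{n,1} < ⋯ and real levels V_{n,k}, and similarly ψ_0 with jumps (a_k) and levels (V_k). Let ψ̃_n, ψ̃_0 be the associated pure jump functions ψ̃(t) = Σ_{k≥1} 1{a_k ≤ t} + Σ_{k≥1} 1{a_{−k} > t}. Assume ψ_n → ψ_0 and ψ̃_n → ψ̃_0 in the Skorohod topology on [−C,C], that ψ_0 has no jumps at ±C, and that for every finite A ⊂ ℤ there is a unique j ∈ A with V_j = max_{m∈A} V_m. Then the smallest maximizer of ψ_n on [−C,C] converges to the smallest maximizer of ψ_0, and the largest maximizer of ψ_n converges to the largest maximizer of ψ_0. -/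

import Mathlib

open Filter Set Topology

/-- `l` is an admissible time change of `[u,v]`. -/
def Adm (u v : ℝ) (l : ℝ → ℝ) : Prop :=
  StrictMonoOn l (Set.Icc u v) ∧ l '' Set.Icc u v = Set.Icc u v

/-- The Skorohod distance on `[u,v]`. -/
noncomputable def skorDist (u v : ℝ) (f g : ℝ → ℝ) : ℝ :=
  sInf {c | ∃ l : ℝ → ℝ, Adm u v l ∧ ∃ m e : ℝ, m + e = c ∧
    (∀ s ∈ Set.Icc u v, ∀ t ∈ Set.Icc u v, s ≠ t →
      |Real.log ((l t - l s) / (t - s))| ≤ m) ∧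
    (∀ x ∈ Set.Icc u v, |f x - g (l x)| ≤ e)}

/-- `x` is a maximizer of `f` on `[-C,C]`: `max (f x) (f (x-))` equals
`sup_{[-C,C]} f`, with the convention `f((-C)-) := f (-C)`. -/
def IsMaxPtOn (C : ℝ) (f : ℝ → ℝ) (x : ℝ) : Prop :=
  x ∈ Set.Icc (-C) C ∧
    max (f x) (if -C < x then Function.leftLim f x else f x) =
      sSup (f '' Set.Icc (-C) C)

/-- `x` is the smallest maximizer of `f` on `[-C,C]`. -/
def IsSmallestMaxOn (C : ℝ) (f : ℝ → ℝ) (x : ℝ) : Prop :=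
  IsMaxPtOn C f x ∧ ∀ y, IsMaxPtOn C f y → x ≤ y

/-- `x` is the largest maximizer of `f` on `[-C,C]`. -/
def IsLargestMaxOn (C : ℝ) (f : ℝ → ℝ) (x : ℝ) : Prop :=
  IsMaxPtOn C f x ∧ ∀ y, IsMaxPtOn C f y → y ≤ x

/-- The step function `ψ` is piecewise constant with strictly increasing jump locations
`A : ℤ → ℝ` (with `A 0 = 0`, `A → ±∞`) and levels `V : ℤ → ℝ`:
`ψ t = V k` on `[A k, A (k+1))`. -/
def IsStepFunction (A : ℤ → ℝ) (V : ℤ → ℝ) (ψ : ℝ → ℝ) : Prop :=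
  StrictMono A ∧ A 0 = 0 ∧ Filter.Tendsto A Filter.atTop Filter.atTop ∧
    Filter.Tendsto A Filter.atBot Filter.atBot ∧
    ∀ k : ℤ, ∀ t : ℝ, A k ≤ t → t < A (k + 1) → ψ t = V k

/-- `J` is the pure jump function `J t = Σ_{k≥1} 1{a_k ≤ t} + Σ_{k≥1} 1{a_{-k} > t}`
associated with the jump locations `A`: on `[A k, A (k+1))` it equals `k` if `k ≥ 0`
and `-k-1` if `k < 0`. -/
def IsPureJump (A : ℤ → ℝ) (J : ℝ → ℝ) : Prop :=
  ∀ k : ℤ, ∀ t : ℝ, A k ≤ t → t < A (k + 1) →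
    J t = if 0 ≤ k then (k : ℝ) else ((-k - 1 : ℤ) : ℝ)

/-! ### Auxiliary lemmas -/

lemma exists_idx {A : ℤ → ℝ} (hA : StrictMono A)
    (htop : Tendsto A atTop atTop) (hbot : Tendsto A atBot atBot) (t : ℝ) :
    ∃ k : ℤ, A k ≤ t ∧ t < A (k + 1) := by
  obtain ⟨b, hb⟩ : ∃ b : ℤ, ∀ z : ℤ, A z ≤ t → z ≤ b := by
    obtain ⟨b, hb⟩ := (htop.eventually (eventually_gt_atTop t)).exists_forall_of_atTop
    exact ⟨b, fun z hz => by
      by_contra h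
      exact absurd (hb z (le_of_not_ge h)) (not_lt.2 hz)⟩
  obtain ⟨z0, hz0⟩ : ∃ z : ℤ, A z ≤ t := by
    obtain ⟨z, hz⟩ := (hbot.eventually (eventually_le_atBot t)).exists_forall_of_atBot
    exact ⟨z, hz z le_rfl⟩
  obtain ⟨k, hk, hmax⟩ := Int.exists_greatest_of_bdd ⟨b, hb⟩ ⟨z0, hz0⟩
  refine ⟨k, hk, ?_⟩
  by_contra h
  exact absurd (hmax (k+1) (le_of_not_gt h)) (by omega)

lemma leftLim_step {A : ℤ → ℝ} {V : ℤ → ℝ} {f : ℝ → ℝ}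
    (hval : ∀ k : ℤ, ∀ t : ℝ, A k ≤ t → t < A (k + 1) → f t = V k)
    {k : ℤ} {x : ℝ} (h1 : A k < x) (h2 : x ≤ A (k + 1)) :
    Function.leftLim f x = V k := by
  apply leftLim_eq_of_tendsto
  have hmem : Ioo (A k) x ∈ 𝓝[<] x := Ioo_mem_nhdsLT_of_mem ⟨h1, le_refl x⟩
  have : ∀ᶠ y in 𝓝[<] x, f y = V k := by
    filter_upwards [hmem] with y hy
    exact hval k y hy.1.le (lt_of_lt_of_le hy.2 h2)
  exact Tendsto.congr' (EventuallyEq.symm this) tendsto_const_nhds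

lemma Adm.fixed {u v : ℝ} {l : ℝ → ℝ} (huv : u ≤ v) (h : Adm u v l) :
    l u = u ∧ l v = v := by
  obtain ⟨hm, him⟩ := h
  have hu : l u ∈ Icc u v := him ▸ mem_image_of_mem l (left_mem_Icc.2 huv)
  have hv : l v ∈ Icc u v := him ▸ mem_image_of_mem l (right_mem_Icc.2 huv)
  constructor
  · refine le_antisymm ?_ hu.1
    by_contra h
    push_neg at h
    obtain ⟨x, hx, hlx⟩ := him.symm ▸ (left_mem_Icc.2 huv)
    have := hm.monotoneOn (left_mem_Icc.2 huv) hx hx.1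
    linarith
  · refine le_antisymm hv.2 ?_
    by_contra h
    push_neg at h
    obtain ⟨x, hx, hlx⟩ := him.symm ▸ (right_mem_Icc.2 huv)
    have := hm.monotoneOn hx (right_mem_Icc.2 huv) hx.2
    linarith

lemma adm_near_id {C : ℝ} (hC : 0 < C) {l : ℝ → ℝ} {m : ℝ} (hm : 0 ≤ m)
    (hadm : Adm (-C) C l)
    (hslope : ∀ s ∈ Icc (-C) C, ∀ t ∈ Icc (-C) C, s ≠ t →
      |Real.log ((l t - l s) / (t - s))| ≤ m) :
    ∀ x ∈ Icc (-C) C, |l x - x| ≤ (Real.exp m - 1) * (2 * C) := by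
  have hexp1 : 1 ≤ Real.exp m := Real.one_le_exp hm
  intro x hx
  obtain ⟨hfu, _⟩ := hadm.fixed (by linarith)
  rcases eq_or_lt_of_le hx.1 with h | h
  · rw [← h, hfu]
    simp
    nlinarith
  · have hlx : -C < l x := by
      rw [← hfu]
      exact hadm.1 (left_mem_Icc.2 (by linarith)) hx h
    have hxC : 0 < x + C := by linarith
    have hr : 0 < (l x - l (-C)) / (x - (-C)) := by
      apply div_pos <;> linarith [hfu]
    have hlog := hslope (-C) (left_mem_Icc.2 (by linarith)) x hx (by linarith)
    rw [abs_le] at hlog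
    have h1 : (l x - l (-C)) / (x - (-C)) ≤ Real.exp m := by
      rw [← Real.exp_log hr]
      exact Real.exp_le_exp.2 hlog.2
    have h2 : Real.exp (-m) ≤ (l x - l (-C)) / (x - (-C)) := by
      rw [← Real.exp_log hr]
      exact Real.exp_le_exp.2 hlog.1
    rw [hfu] at h1 h2
    rw [div_le_iff₀ (by linarith)] at h1
    rw [le_div_iff₀ (by linarith)] at h2
    have hprod : Real.exp m * Real.exp (-m) = 1 := by
      rw [← Real.exp_add]; simp
    have hen : 0 < Real.exp (-m) := Real.exp_pos _
    have hxC2 : x + C ≤ 2 * C := by linarith [hx.2]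
    have hle1 : Real.exp (-m) ≤ 1 := by nlinarith
    rw [abs_le]
    constructor
    · have hA : (1 - Real.exp (-m)) * (x + C) ≤ (1 - Real.exp (-m)) * (2*C) :=
        mul_le_mul_of_nonneg_left hxC2 (by linarith)
      have hB : (1 - Real.exp (-m)) * (2*C) ≤ (Real.exp m - 1) * (2*C) :=
        mul_le_mul_of_nonneg_right (by nlinarith) (by linarith)
      linarith
    · have hA : (Real.exp m - 1) * (x + C) ≤ (Real.exp m - 1) * (2*C) :=
        mul_le_mul_of_nonneg_left hxC2 (by linarith)
      linarith

lemma skor_extract {C : ℝ} (hC : 0 < C) {f : ℕ → ℝ → ℝ} {g : ℝ → ℝ}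
    (hconv : Tendsto (fun n => skorDist (-C) C (f n) g) atTop (nhds 0))
    (hbdd : ∀ n, ∃ M : ℝ, ∀ x ∈ Icc (-C) C, |f n x - g x| ≤ M) :
    ∀ ε > 0, ∀ᶠ n in atTop, ∃ l, Adm (-C) C l ∧
      (∀ x ∈ Icc (-C) C, |l x - x| ≤ ε) ∧ (∀ x ∈ Icc (-C) C, |f n x - g (l x)| ≤ ε) := by
  intro ε hε
  set ε' : ℝ := min ε (Real.log (1 + ε / (2 * C))) with hε'def
  have harg : (0:ℝ) < 1 + ε / (2 * C) := by positivity
  have hε' : 0 < ε' := lt_min hε (Real.log_pos (by nlinarith [div_pos hε (by linarith : (0:ℝ) < 2*C)]))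
  have hev := hconv.eventually (eventually_lt_nhds hε')
  filter_upwards [hev] with n hn
  set S : Set ℝ := {c | ∃ l : ℝ → ℝ, Adm (-C) C l ∧ ∃ m e : ℝ, m + e = c ∧
    (∀ s ∈ Set.Icc (-C) C, ∀ t ∈ Set.Icc (-C) C, s ≠ t →
      |Real.log ((l t - l s) / (t - s))| ≤ m) ∧
    (∀ x ∈ Set.Icc (-C) C, |f n x - g (l x)| ≤ e)} with hSdef
  have hSne : S.Nonempty := by
    obtain ⟨M, hM⟩ := hbdd n
    refine ⟨0 + M, id, ⟨strictMonoOn_id, image_id _⟩, 0, M, rfl, ?_, ?_⟩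
    · intro s hs t ht hst
      have : (t - s) / (t - s) = 1 := div_self (sub_ne_zero.2 (fun h => hst (h.symm)))
      simp [this]
    · intro x hx; exact hM x hx
  obtain ⟨c, hcS, hc⟩ : ∃ c ∈ S, c < ε' := exists_lt_of_csInf_lt hSne hn
  obtain ⟨l, hadm, m, e, hme, hslope, hdist⟩ := hcS
  have hmemC : (-C) ∈ Icc (-C) C := left_mem_Icc.2 (by linarith)
  have hmemC' : C ∈ Icc (-C) C := right_mem_Icc.2 (by linarith)
  have hm0 : 0 ≤ m := le_trans (abs_nonneg _) (hslope (-C) hmemC C hmemC' (by intro h; linarith [congrArg id h]))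
  have he0 : 0 ≤ e := le_trans (abs_nonneg _) (hdist (-C) hmemC)
  have hmlt : m < ε' := by linarith
  have helt : e < ε' := by linarith
  refine ⟨l, hadm, ?_, ?_⟩
  · intro x hx
    have := adm_near_id hC hm0 hadm hslope x hx
    refine this.trans ?_
    have h1 : Real.exp m ≤ Real.exp (Real.log (1 + ε / (2*C))) :=
      Real.exp_le_exp.2 (le_trans hmlt.le (min_le_right _ _))
    rw [Real.exp_log harg] at h1
    have h2C : (0:ℝ) < 2*C := by linarith
    calc (Real.exp m - 1) * (2*C) ≤ (ε / (2*C)) * (2*C) := by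
          apply mul_le_mul_of_nonneg_right (by linarith) (by linarith)
      _ = ε := by field_simp
  · intro x hx
    refine (hdist x hx).trans ?_
    have : ε' ≤ ε := min_le_left _ _
    linarith

lemma idx_range {C : ℝ} {A : ℤ → ℝ} (hA : StrictMono A) {kmin kmax k : ℤ} {t : ℝ}
    (hmin1 : A kmin ≤ -C) (hmax2 : C < A (kmax+1)) (ht1 : -C ≤ t) (ht2 : t ≤ C)
    (hk1 : A k ≤ t) (hk2 : t < A (k+1)) : kmin ≤ k ∧ k ≤ kmax := by
  constructor
  · by_contra h
    push_neg at h
    have := hA.monotone (by omega : k + 1 ≤ kmin)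
    linarith
  · by_contra h
    push_neg at h
    have := hA.monotone (by omega : kmax + 1 ≤ k)
    linarith

lemma step_bdd {C : ℝ} (hC : 0 < C) {A V : ℤ → ℝ} {f : ℝ → ℝ}
    (hsf : IsStepFunction A V f) : ∃ M, ∀ x ∈ Icc (-C) C, |f x| ≤ M := by
  obtain ⟨hA, hA0, htop, hbot, hval⟩ := hsf
  obtain ⟨a, ha1, ha2⟩ := exists_idx hA htop hbot (-C)
  obtain ⟨b, hb1, hb2⟩ := exists_idx hA htop hbot C
  have hab : a ≤ b := by
    by_contra h
    push_neg at h
    have := hA.monotone (by omega : b + 1 ≤ a)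
    linarith
  have hne' : (Finset.Icc a b).Nonempty := ⟨a, Finset.mem_Icc.2 ⟨le_rfl, hab⟩⟩
  have hne : ((Finset.Icc a b).image (fun k => |V k|)).Nonempty := hne'.image _
  refine ⟨((Finset.Icc a b).image (fun k => |V k|)).max' hne, fun x hx => ?_⟩
  obtain ⟨k, hk1, hk2⟩ := exists_idx hA htop hbot x
  obtain ⟨hka, hkb⟩ := idx_range hA ha1 hb2 hx.1 hx.2 hk1 hk2
  rw [hval k x hk1 hk2]
  exact Finset.le_max' _ _ (Finset.mem_image_of_mem (fun k => |V k|) (Finset.mem_Icc.2 ⟨hka, hkb⟩))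

lemma maxpt_iff {C : ℝ} (hC : 0 < C) {A V : ℤ → ℝ} {f : ℝ → ℝ}
    (hsf : IsStepFunction A V f) {kmin kmax ks : ℤ}
    (hmin1 : A kmin ≤ -C) (hmin2 : -C < A (kmin+1))
    (hmax1 : A kmax ≤ C) (hmax2 : C < A (kmax+1))
    (hks1 : kmin ≤ ks) (hks2 : ks ≤ kmax)
    (hV : ∀ k, kmin ≤ k → k ≤ kmax → k ≠ ks → V k < V ks) :
    ∀ x, IsMaxPtOn C f x ↔ (max (A ks) (-C) ≤ x ∧ x ≤ min (A (ks+1)) C) := by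
  obtain ⟨hA, hA0, htop, hbot, hval⟩ := hsf
  have hVle : ∀ k, kmin ≤ k → k ≤ kmax → V k ≤ V ks := by
    intro k h1 h2
    by_cases h : k = ks
    · exact h ▸ le_rfl
    · exact (hV k h1 h2 h).le
  have hfval : ∀ t, -C ≤ t → t ≤ C →
      ∃ k, kmin ≤ k ∧ k ≤ kmax ∧ f t = V k ∧ A k ≤ t ∧ t < A (k+1) := by
    intro t h1 h2
    obtain ⟨k, hk1, hk2⟩ := exists_idx hA htop hbot t
    obtain ⟨hka, hkb⟩ := idx_range hA hmin1 hmax2 h1 h2 hk1 hk2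
    exact ⟨k, hka, hkb, hval k t hk1 hk2, hk1, hk2⟩
  have hAksC : A ks ≤ C := le_trans (hA.monotone hks2) hmax1
  have hCAks1 : -C < A (ks+1) := lt_of_lt_of_le hmin2 (hA.monotone (by omega))
  have hxhat_mem : max (A ks) (-C) ∈ Icc (-C) C := ⟨le_max_right _ _, max_le hAksC (by linarith)⟩
  have hxhat_lt : max (A ks) (-C) < A (ks+1) := max_lt (hA (by omega)) hCAks1
  have hxhat_val : f (max (A ks) (-C)) = V ks := hval ks _ (le_max_left _ _) hxhat_lt
  have hsup : sSup (f '' Icc (-C) C) = V ks := by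
    apply IsGreatest.csSup_eq
    constructor
    · exact ⟨_, hxhat_mem, hxhat_val⟩
    · rintro y ⟨t, ht, rfl⟩
      obtain ⟨k, h1, h2, hft, _, _⟩ := hfval t ht.1 ht.2
      rw [hft]
      exact hVle k h1 h2
  intro x
  constructor
  · rintro ⟨hxmem, hmx⟩
    rw [hsup] at hmx
    obtain ⟨k, hk1, hk2, hfx, hAk, hAk1⟩ := hfval x hxmem.1 hxmem.2
    by_cases hx : -C < x
    · rw [if_pos hx] at hmx
      by_cases hxa : A k < x
      · have hll : Function.leftLim f x = V k := leftLim_step hval hxa hAk1.le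
        rw [hfx, hll, max_self] at hmx
        have hkks : k = ks := by
          by_contra h
          exact absurd hmx (ne_of_lt (hV k hk1 hk2 h))
        subst hkks
        exact ⟨max_le hAk hxmem.1, le_min hAk1.le hxmem.2⟩
      · have hxa' : x = A k := le_antisymm (not_lt.1 hxa) hAk
        have hll : Function.leftLim f x = V (k-1) := by
          apply leftLim_step hval (show A (k-1) < x by rw [hxa']; exact hA (by omega))
          rw [hxa']
          exact le_of_eq (by congr 1; omega)
        have hk1' : kmin ≤ k - 1 := by
          by_contra h
          push_neg at h
          have h2 := hA.monotone (by omega : k ≤ kmin)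
          rw [← hxa'] at h2
          linarith
        rw [hfx, hll] at hmx
        rcases max_cases (V k) (V (k-1)) with ⟨h, _⟩ | ⟨h, _⟩ <;> rw [h] at hmx
        · have hkks : k = ks := by
            by_contra hne
            exact absurd hmx (ne_of_lt (hV k hk1 hk2 hne))
          subst hkks
          exact ⟨max_le hAk hxmem.1, le_min hAk1.le hxmem.2⟩
        · have hkks : k - 1 = ks := by
            by_contra hne
            exact absurd hmx (ne_of_lt (hV (k-1) hk1' (by omega) hne))
          have hxeq : x = A (ks + 1) := by rw [hxa']; congr 1; omega
          constructor
          · rw [hxeq]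
            exact max_le (hA (by omega : ks < ks + 1)).le hCAks1.le
          · exact le_min hxeq.le hxmem.2
    · have hx' : x = -C := le_antisymm (not_lt.1 hx) hxmem.1
      rw [if_neg hx, hfx, max_self] at hmx
      have hkks : k = ks := by
        by_contra h
        exact absurd hmx (ne_of_lt (hV k hk1 hk2 h))
      subst hkks
      exact ⟨max_le hAk hxmem.1, le_min hAk1.le hxmem.2⟩
  · rintro ⟨h1, h2⟩
    have hxmem : x ∈ Icc (-C) C := ⟨le_trans (le_max_right _ _) h1, le_trans h2 (min_le_right _ _)⟩
    refine ⟨hxmem, ?_⟩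
    rw [hsup]
    have hAksx : A ks ≤ x := le_trans (le_max_left _ _) h1
    rcases lt_or_eq_of_le (le_trans h2 (min_le_left _ _)) with hlt | heq
    · have hfx : f x = V ks := hval ks x hAksx hlt
      rw [hfx]
      by_cases hx : -C < x
      · rw [if_pos hx]
        by_cases hxa : A ks < x
        · rw [leftLim_step hval hxa hlt.le, max_self]
        · have hxa' : x = A ks := le_antisymm (not_lt.1 hxa) hAksx
          have hll : Function.leftLim f x = V (ks-1) := by
            apply leftLim_step hval (show A (ks-1) < x by rw [hxa']; exact hA (by omega))
            rw [hxa']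
            exact le_of_eq (by congr 1; omega)
          have hk1' : kmin ≤ ks - 1 := by
            by_contra h
            push_neg at h
            have h2' := hA.monotone (by omega : ks ≤ kmin)
            rw [← hxa'] at h2'
            linarith
          rw [hll]
          exact max_eq_left (hVle (ks-1) hk1' (by omega))
      · rw [if_neg hx, max_self]
    · have hll : Function.leftLim f x = V ks := by
        apply leftLim_step hval (show A ks < x by rw [heq]; exact hA (by omega)) heq.le
      have hx : -C < x := by rw [heq]; exact hCAks1
      rw [if_pos hx, hll]
      obtain ⟨j, hj1, hj2, hfx, _, _⟩ := hfval x hxmem.1 hxmem.2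
      rw [hfx]
      exact max_eq_right (hVle j hj1 hj2)

def kint (k : ℤ) : ℤ := if 0 ≤ k then k else -k - 1

lemma pureJump_val {A : ℤ → ℝ} {J : ℝ → ℝ} (h : IsPureJump A J)
    {k : ℤ} {t : ℝ} (h1 : A k ≤ t) (h2 : t < A (k + 1)) : J t = (kint k : ℝ) := by
  rw [h k t h1 h2, kint]
  split_ifs <;> push_cast <;> ring

lemma int_close {a b : ℤ} {ε : ℝ} (h : |(a:ℝ) - (b:ℝ)| ≤ ε) (hε : ε < 1) : a = b := by
  have h1 : |((a - b : ℤ) : ℝ)| < 1 := by push_cast; exact lt_of_le_of_lt h hε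
  have h2 : |a - b| < 1 := by exact_mod_cast h1
  rw [abs_lt] at h2
  omega

lemma kint_inj {j k : ℤ} (h : kint j = kint k) (hs : 0 ≤ j ↔ 0 ≤ k) : j = k := by
  by_cases h1 : 0 ≤ j <;> by_cases h2 : 0 ≤ k <;> simp [kint, h1, h2] at h <;> omega

lemma kint_cases {j k : ℤ} (h : kint j = kint k) : j = k ∨ j = -k - 1 := by
  by_cases h1 : 0 ≤ j <;> by_cases h2 : 0 ≤ k <;> simp [kint, h1, h2] at h <;> omega

lemma idx_sign {A : ℤ → ℝ} (hA0 : A 0 = 0) (hA : StrictMono A) {k : ℤ} {s : ℝ}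
    (h1 : A k ≤ s) (h2 : s < A (k + 1)) : 0 ≤ k ↔ 0 ≤ s := by
  constructor
  · intro h
    calc (0:ℝ) = A 0 := hA0.symm
    _ ≤ A k := hA.monotone h
    _ ≤ s := h1
  · intro h
    by_contra hk
    push_neg at hk
    have : A (k+1) ≤ A 0 := hA.monotone (by omega)
    rw [hA0] at this
    linarith

lemma abs_min_sub_min_le_abs' (a b c : ℝ) : |min a c - min b c| ≤ |a - b| := by
  have h := abs_max_sub_max_le_abs (-a) (-b) (-c)
  rw [max_neg_neg, max_neg_neg, neg_sub_neg, neg_sub_neg] at h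
  calc |min a c - min b c| = |min b c - min a c| := abs_sub_comm _ _
    _ ≤ |b - a| := h
    _ = |a - b| := abs_sub_comm _ _

lemma jump_align {C : ℝ} (hC : 0 < C) {An A0 : ℤ → ℝ} {Jn J0 : ℝ → ℝ}
    (hAns : StrictMono An) (hAn0 : An 0 = 0)
    (htopn : Tendsto An atTop atTop) (hbotn : Tendsto An atBot atBot)
    (hJn : IsPureJump An Jn)
    (hA0s : StrictMono A0) (hA00 : A0 0 = 0) (hJ0 : IsPureJump A0 J0)
    {kmin kmax : ℤ} (hmin1 : A0 kmin ≤ -C) (hmin2 : -C < A0 (kmin+1))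
    (hmax1 : A0 kmax ≤ C) (hmax2 : C < A0 (kmax+1))
    {l : ℝ → ℝ} (hadm : Adm (-C) C l) {ε : ℝ} (hε : 0 < ε) (hε1 : ε < 1/2)
    (hεA1 : ε < A0 1) (hεA1' : ε < -A0 (-1))
    (hgap : ∀ k, kmin < k → k ≤ kmax → ε < A0 k - max (A0 (k-1)) (-C))
    (hl : ∀ x ∈ Icc (-C) C, |l x - x| ≤ ε)
    (hJ : ∀ x ∈ Icc (-C) C, |Jn x - J0 (l x)| ≤ ε) :
    (An kmin ≤ -C ∧ -C < An (kmin+1)) ∧ (An kmax ≤ C ∧ C < An (kmax+1)) ∧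
    ∀ k, kmin < k → k ≤ kmax → |An k - A0 k| ≤ 2*ε := by
  obtain ⟨hlu, hlv⟩ := hadm.fixed (by linarith)
  have hCC : -C ≤ C := by linarith
  have hmemu : (-C) ∈ Icc (-C) C := left_mem_Icc.2 hCC
  have hmemv : C ∈ Icc (-C) C := right_mem_Icc.2 hCC
  have hkmin : kmin < 0 := by
    by_contra h
    push_neg at h
    have := hA0s.monotone h
    rw [hA00] at this
    linarith
  have hkmax : 0 ≤ kmax := by
    by_contra h
    push_neg at h
    have : A0 (kmax+1) ≤ A0 0 := hA0s.monotone (by omega)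
    rw [hA00] at this
    linarith
  have hendmin : An kmin ≤ -C ∧ -C < An (kmin+1) := by
    obtain ⟨j, hj1, hj2⟩ := exists_idx hAns htopn hbotn (-C)
    have hJnv : Jn (-C) = (kint j : ℝ) := pureJump_val hJn hj1 hj2
    have hJ0v : J0 (l (-C)) = (kint kmin : ℝ) := by
      rw [hlu]; exact pureJump_val hJ0 hmin1 hmin2
    have hclose := hJ (-C) hmemu
    rw [hJnv, hJ0v] at hclose
    have hkk : kint j = kint kmin := int_close hclose (by linarith)
    have hsj : ¬ (0 ≤ j) := by
      rw [idx_sign hAn0 hAns hj1 hj2]; push_neg; linarith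
    have : j = kmin := kint_inj hkk (by constructor <;> intro h <;> [exact absurd h hsj; omega])
    subst this
    exact ⟨hj1, hj2⟩
  have hendmax : An kmax ≤ C ∧ C < An (kmax+1) := by
    obtain ⟨j, hj1, hj2⟩ := exists_idx hAns htopn hbotn C
    have hJnv : Jn C = (kint j : ℝ) := pureJump_val hJn hj1 hj2
    have hJ0v : J0 (l C) = (kint kmax : ℝ) := by
      rw [hlv]; exact pureJump_val hJ0 hmax1 hmax2
    have hclose := hJ C hmemv
    rw [hJnv, hJ0v] at hclose
    have hkk : kint j = kint kmax := int_close hclose (by linarith)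
    have hsj : 0 ≤ j := by rw [idx_sign hAn0 hAns hj1 hj2]; linarith
    have : j = kmax := kint_inj hkk (by constructor <;> intro h <;> [exact hkmax; exact hsj])
    subst this
    exact ⟨hj1, hj2⟩
  refine ⟨hendmin, hendmax, ?_⟩
  intro k hk1 hk2
  by_cases hk0 : k = 0
  · subst hk0
    rw [hAn0, hA00]
    simp
    linarith
  have hA0kC : A0 k ≤ C := le_trans (hA0s.monotone hk2) hmax1
  have hA0knC : -C < A0 k := lt_of_lt_of_le hmin2 (hA0s.monotone (by omega))
  have hA0mem : A0 k ∈ Icc (-C) C := ⟨hA0knC.le, hA0kC⟩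
  have hupper : An k ≤ A0 k + ε := by
    obtain ⟨s, hs, hls⟩ : ∃ s ∈ Icc (-C) C, l s = A0 k := by
      rwa [← hadm.2] at hA0mem
    obtain ⟨j, hj1, hj2⟩ := exists_idx hAns htopn hbotn s
    have hclose := hJ s hs
    rw [pureJump_val hJn hj1 hj2, hls,
      pureJump_val hJ0 (le_refl (A0 k)) (hA0s (by omega : k < k + 1))] at hclose
    have hkk : kint j = kint k := int_close hclose (by linarith)
    have hsdist : |l s - s| ≤ ε := hl s hs
    rw [hls] at hsdist
    rw [abs_le] at hsdist
    have hsign : 0 ≤ j ↔ 0 ≤ k := by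
      rw [idx_sign hAn0 hAns hj1 hj2]
      rcases lt_or_ge k 0 with hneg | hpos
      · have : A0 k ≤ A0 (-1) := hA0s.monotone (by omega)
        constructor <;> intro h <;> [linarith; linarith]
      · have : A0 1 ≤ A0 k := hA0s.monotone (by omega)
        constructor <;> intro h <;> [linarith; linarith]
    have : j = k := kint_inj hkk hsign
    subst this
    linarith
  have hlower : A0 k - 2*ε ≤ An k := by
    set y : ℝ := A0 k - ε with hy
    have hgapk := hgap k hk1 hk2
    have hy1 : A0 (k-1) ≤ y := by
      have := le_max_left (A0 (k-1)) (-C)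
      simp only [hy]; linarith
    have hy2 : y < A0 k := by simp only [hy]; linarith
    have hymem : y ∈ Icc (-C) C := by
      constructor
      · have := le_max_right (A0 (k-1)) (-C)
        simp only [hy]; linarith
      · simp only [hy]; linarith
    obtain ⟨s, hs, hls⟩ : ∃ s ∈ Icc (-C) C, l s = y := by rwa [← hadm.2] at hymem
    obtain ⟨j, hj1, hj2⟩ := exists_idx hAns htopn hbotn s
    have hclose := hJ s hs
    have hy2' : y < A0 ((k-1) + 1) := by
      have : (k-1) + 1 = k := by omega
      rw [this]; exact hy2
    rw [pureJump_val hJn hj1 hj2, hls, pureJump_val hJ0 hy1 hy2'] at hclose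
    have hkk : kint j = kint (k-1) := int_close hclose (by linarith)
    have hsdist : |l s - s| ≤ ε := hl s hs
    rw [hls, abs_le] at hsdist
    have hjk : j + 1 ≤ k := by
      rcases lt_or_ge k 0 with hneg | hpos
      · have hA0neg : A0 k ≤ A0 (-1) := hA0s.monotone (by omega)
        have hsneg : s < 0 := by simp only [hy] at hsdist; linarith
        have hjneg : ¬ (0 ≤ j) := by rw [idx_sign hAn0 hAns hj1 hj2]; linarith
        have : j = k - 1 := by
          rcases kint_cases hkk with h | h
          · exact h
          · exfalso
            simp only [kint] at hkk
            rw [if_neg hjneg] at hkk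
            by_cases h2 : 0 ≤ k - 1 <;> [omega; (rw [if_neg h2] at hkk; omega)]
        omega
      · rcases kint_cases hkk with h | h <;> omega
    have : s < An k := lt_of_lt_of_le hj2 (hAns.monotone (by omega))
    simp only [hy] at hsdist
    linarith
  rw [abs_le]
  constructor <;> linarith


/-- Continuous mapping theorem for the smallest and largest argmax of step functions:
if `ψ_n → ψ_0` and the associated pure jump functions `J_n → J_0` in the Skorohod
topology on `[-C,C]`, `ψ_0` has no jumps at `±C`, and among any finite set of levels
of `ψ_0` there is a unique maximal one, then the smallest (resp. largest) maximizers
of `ψ_n` on `[-C,C]` converge to the smallest (resp. largest) maximizer of `ψ_0`. -/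
theorem argmax_convergence_step_functions (C : ℝ) (hC : 0 < C)
    (A : ℕ → ℤ → ℝ) (V : ℕ → ℤ → ℝ) (ψ : ℕ → ℝ → ℝ) (J : ℕ → ℝ → ℝ)
    (A0 : ℤ → ℝ) (V0 : ℤ → ℝ) (ψ0 : ℝ → ℝ) (J0 : ℝ → ℝ)
    (hstep : ∀ n, IsStepFunction (A n) (V n) (ψ n))
    (hjumpfn : ∀ n, IsPureJump (A n) (J n))
    (hstep0 : IsStepFunction A0 V0 ψ0) (hjumpf0 : IsPureJump A0 J0)
    (hconvψ : Filter.Tendsto (fun n => skorDist (-C) C (ψ n) ψ0)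
      Filter.atTop (nhds 0))
    (hconvJ : Filter.Tendsto (fun n => skorDist (-C) C (J n) J0)
      Filter.atTop (nhds 0))
    (hnojump : ∀ k : ℤ, A0 k ≠ C ∧ A0 k ≠ -C)
    (huniq : ∀ S : Finset ℤ, S.Nonempty →
      ∃! j : ℤ, j ∈ S ∧ ∀ i ∈ S, V0 i ≤ V0 j) :
    (∀ (x : ℕ → ℝ) (x0 : ℝ), (∀ n, IsSmallestMaxOn C (ψ n) (x n)) →
      IsSmallestMaxOn C ψ0 x0 → Filter.Tendsto x Filter.atTop (nhds x0)) ∧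
    (∀ (x : ℕ → ℝ) (x0 : ℝ), (∀ n, IsLargestMaxOn C (ψ n) (x n)) →
      IsLargestMaxOn C ψ0 x0 → Filter.Tendsto x Filter.atTop (nhds x0)) := by
  classical
  obtain ⟨hA0s, hA00, htop0, hbot0, hval0⟩ := hstep0
  obtain ⟨kmin, hmin1, hmin2⟩ := exists_idx hA0s htop0 hbot0 (-C)
  obtain ⟨kmax, hmax1, hmax2⟩ := exists_idx hA0s htop0 hbot0 C
  have hmaxS : A0 kmax < C := lt_of_le_of_ne hmax1 (hnojump kmax).1
  have hkmin0 : kmin < 0 := by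
    by_contra h
    push_neg at h
    have := hA0s.monotone h
    rw [hA00] at this
    linarith
  have hkmax0 : 0 ≤ kmax := by
    by_contra h
    push_neg at h
    have : A0 (kmax+1) ≤ A0 0 := hA0s.monotone (by omega)
    rw [hA00] at this
    linarith
  have hA01pos : 0 < A0 1 := by
    rw [← hA00]
    exact hA0s (by omega)
  have hA0m1neg : A0 (-1) < 0 := by
    rw [← hA00]
    exact hA0s (by omega)
  -- the dominant index
  have hSne : (Finset.Icc kmin kmax).Nonempty := ⟨0, Finset.mem_Icc.2 ⟨by omega, by omega⟩⟩
  obtain ⟨ks, ⟨hksS, hksmax⟩, hksu⟩ := huniq _ hSne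
  obtain ⟨hks1, hks2⟩ := Finset.mem_Icc.1 hksS
  have hVstrict : ∀ k, kmin ≤ k → k ≤ kmax → k ≠ ks → V0 k < V0 ks := by
    intro k h1 h2 hne
    rcases lt_or_eq_of_le (hksmax k (Finset.mem_Icc.2 ⟨h1, h2⟩)) with h | h
    · exact h
    · exact absurd (hksu k ⟨Finset.mem_Icc.2 ⟨h1, h2⟩,
        fun i hi => (hksmax i hi).trans_eq h.symm⟩) hne
  -- the gap δ in the levels
  obtain ⟨δ, hδpos, hδ⟩ : ∃ δ, 0 < δ ∧
      ∀ k, kmin ≤ k → k ≤ kmax → k ≠ ks → V0 k ≤ V0 ks - δ := by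
    set T := (Finset.Icc kmin kmax).erase ks with hT
    by_cases hTne : T.Nonempty
    · refine ⟨V0 ks - ((T.image V0).max' (hTne.image _)), ?_, ?_⟩
      · obtain ⟨j, hj, hjeq⟩ := Finset.mem_image.1 (Finset.max'_mem (T.image V0) (hTne.image _))
        rw [← hjeq]
        obtain ⟨hjne, hjmem⟩ := Finset.mem_erase.1 hj
        obtain ⟨hj1, hj2⟩ := Finset.mem_Icc.1 hjmem
        linarith [hVstrict j hj1 hj2 hjne]
      · intro k h1 h2 hne
        have : V0 k ≤ (T.image V0).max' (hTne.image _) :=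
          Finset.le_max' _ _ (Finset.mem_image_of_mem V0
            (Finset.mem_erase.2 ⟨hne, Finset.mem_Icc.2 ⟨h1, h2⟩⟩))
        linarith
    · exact ⟨1, one_pos, fun k h1 h2 hne =>
        absurd ⟨k, Finset.mem_erase.2 ⟨hne, Finset.mem_Icc.2 ⟨h1, h2⟩⟩⟩ hTne⟩
  -- the minimal interval width G
  set gapf : ℤ → ℝ := fun k => min (A0 (k+1)) C - max (A0 k) (-C) with hgapf
  set G : ℝ := ((Finset.Icc kmin kmax).image gapf).min' (hSne.image _) with hG
  have hGle : ∀ k, kmin ≤ k → k ≤ kmax → G ≤ gapf k := fun k h1 h2 =>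
    Finset.min'_le _ _ (Finset.mem_image_of_mem gapf (Finset.mem_Icc.2 ⟨h1, h2⟩))
  have hGpos : 0 < G := by
    obtain ⟨j, hj, hjeq⟩ := Finset.mem_image.1
      (Finset.min'_mem ((Finset.Icc kmin kmax).image gapf) (hSne.image _))
    rw [hG, ← hjeq]
    obtain ⟨hj1, hj2⟩ := Finset.mem_Icc.1 hj
    have e1 : A0 j < min (A0 (j+1)) C :=
      lt_min (hA0s (by omega)) (lt_of_le_of_lt (hA0s.monotone hj2) hmaxS)
    have e2 : (-C) < min (A0 (j+1)) C :=
      lt_min (lt_of_lt_of_le hmin2 (hA0s.monotone (by omega))) (by linarith)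
    have := max_lt e1 e2
    simp only [hgapf]
    linarith
  -- the minimal backward gap g
  set bgapf : ℤ → ℝ := fun k => A0 k - max (A0 (k-1)) (-C) with hbgapf
  have hgne : (Finset.Icc (kmin+1) kmax).Nonempty := ⟨0, Finset.mem_Icc.2 ⟨by omega, by omega⟩⟩
  set g : ℝ := ((Finset.Icc (kmin+1) kmax).image bgapf).min' (hgne.image _) with hg
  have hgle : ∀ k, kmin < k → k ≤ kmax → g ≤ bgapf k := fun k h1 h2 =>
    Finset.min'_le _ _ (Finset.mem_image_of_mem bgapf (Finset.mem_Icc.2 ⟨by omega, h2⟩))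
  have hgpos : 0 < g := by
    obtain ⟨j, hj, hjeq⟩ := Finset.mem_image.1
      (Finset.min'_mem ((Finset.Icc (kmin+1) kmax).image bgapf) (hgne.image _))
    rw [hg, ← hjeq]
    obtain ⟨hj1, hj2⟩ := Finset.mem_Icc.1 hj
    have e1 : A0 (j-1) < A0 j := hA0s (by omega)
    have e2 : (-C) < A0 j := lt_of_lt_of_le hmin2 (hA0s.monotone (by omega))
    have := max_lt e1 e2
    simp only [hbgapf]
    linarith
  -- boundedness of the differences
  have habs : ∀ a b : ℝ, |a - b| ≤ |a| + |b| := by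
    intro a b
    calc |a - b| = |a + (-b)| := by ring_nf
      _ ≤ |a| + |(-b)| := abs_add_le _ _
      _ = |a| + |b| := by rw [abs_neg]
  have hbddψ : ∀ n, ∃ M, ∀ x ∈ Icc (-C) C, |ψ n x - ψ0 x| ≤ M := by
    intro n
    obtain ⟨M1, hM1⟩ := step_bdd hC (hstep n)
    obtain ⟨M2, hM2⟩ := step_bdd hC ⟨hA0s, hA00, htop0, hbot0, hval0⟩
    exact ⟨M1 + M2, fun x hx => (habs _ _).trans (add_le_add (hM1 x hx) (hM2 x hx))⟩
  have hbddJ : ∀ n, ∃ M, ∀ x ∈ Icc (-C) C, |J n x - J0 x| ≤ M := by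
    intro n
    obtain ⟨M1, hM1⟩ := step_bdd hC (V := fun k : ℤ => if 0 ≤ k then (k:ℝ) else ((-k - 1 : ℤ) : ℝ))
      ⟨(hstep n).1, (hstep n).2.1, (hstep n).2.2.1, (hstep n).2.2.2.1, hjumpfn n⟩
    obtain ⟨M2, hM2⟩ := step_bdd hC (V := fun k : ℤ => if 0 ≤ k then (k:ℝ) else ((-k - 1 : ℤ) : ℝ))
      ⟨hA0s, hA00, htop0, hbot0, hjumpf0⟩
    exact ⟨M1 + M2, fun x hx => (habs _ _).trans (add_le_add (hM1 x hx) (hM2 x hx))⟩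
  -- characterization of the maximizers of ψ0
  have hiff0 := maxpt_iff hC ⟨hA0s, hA00, htop0, hbot0, hval0⟩ hmin1 hmin2 hmax1 hmax2
    hks1 hks2 hVstrict
  have hA0ksC : A0 ks ≤ C := (hA0s.monotone hks2).trans hmax1
  have hCks1 : -C < A0 (ks+1) := lt_of_lt_of_le hmin2 (hA0s.monotone (by omega))
  have hmaxlemin : max (A0 ks) (-C) ≤ min (A0 (ks+1)) C :=
    max_le (le_min (hA0s (by omega : ks < ks+1)).le hA0ksC) (le_min hCks1.le (by linarith))
  have hx0max : IsMaxPtOn C ψ0 (max (A0 ks) (-C)) := (hiff0 _).2 ⟨le_rfl, hmaxlemin⟩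
  have hy0max : IsMaxPtOn C ψ0 (min (A0 (ks+1)) C) := (hiff0 _).2 ⟨hmaxlemin, le_rfl⟩
  -- the key eventual statement
  have key : ∀ ε : ℝ, 0 < ε → ∀ᶠ n in atTop,
      (∀ z, IsMaxPtOn C (ψ n) z ↔ max (A n ks) (-C) ≤ z ∧ z ≤ min (A n (ks+1)) C) ∧
      |max (A n ks) (-C) - max (A0 ks) (-C)| < ε ∧
      |min (A n (ks+1)) C - min (A0 (ks+1)) C| < ε := by
    intro ε hε
    set m0 : ℝ := min (min (1/3) (ε/4)) (min (min (G/4) g) (min (A0 1) (-A0 (-1)))) with hm0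
    have hm0pos : 0 < m0 :=
      lt_min (lt_min (by norm_num) (by linarith))
        (lt_min (lt_min (by linarith) hgpos) (lt_min hA01pos (by linarith)))
    have hm0_13 : m0 ≤ 1/3 := le_trans (min_le_left _ _) (min_le_left _ _)
    have hm0_ε : m0 ≤ ε/4 := le_trans (min_le_left _ _) (min_le_right _ _)
    have hm0_G : m0 ≤ G/4 := le_trans (min_le_right _ _) (le_trans (min_le_left _ _) (min_le_left _ _))
    have hm0_g : m0 ≤ g := le_trans (min_le_right _ _) (le_trans (min_le_left _ _) (min_le_right _ _))
    have hm0_A1 : m0 ≤ A0 1 := le_trans (min_le_right _ _) (le_trans (min_le_right _ _) (min_le_left _ _))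
    have hm0_Am1 : m0 ≤ -A0 (-1) := le_trans (min_le_right _ _) (le_trans (min_le_right _ _) (min_le_right _ _))
    set εJ : ℝ := m0 / 2 with hεJ
    have hεJpos : 0 < εJ := by positivity
    set εV : ℝ := min (δ/3) (G/4) / 2 with hεV
    have hεVpos : 0 < εV := by
      rw [hεV]
      have := lt_min (by linarith : (0:ℝ) < δ/3) (by linarith : (0:ℝ) < G/4)
      linarith
    have hεVδ : εV ≤ δ/3 := by
      rw [hεV]
      have h1 : min (δ/3) (G/4) ≤ δ/3 := min_le_left _ _
      have h2 : 0 ≤ min (δ/3) (G/4) := le_min (by linarith) (by linarith)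
      linarith
    have hεVG : εV ≤ G/8 := by
      rw [hεV]
      have h1 : min (δ/3) (G/4) ≤ G/4 := min_le_right _ _
      linarith
    filter_upwards [skor_extract hC hconvJ hbddJ εJ hεJpos,
      skor_extract hC hconvψ hbddψ εV hεVpos] with n hJev hψev
    obtain ⟨l, hadm, hlid, hlJ⟩ := hJev
    obtain ⟨l', hadm', hl'id, hl'ψ⟩ := hψev
    obtain ⟨hAns, hAn0, htopn, hbotn, hvaln⟩ := hstep n
    obtain ⟨⟨hnmin1, hnmin2⟩, ⟨hnmax1, hnmax2⟩, hjc⟩ :=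
      jump_align hC hAns hAn0 htopn hbotn (hjumpfn n) hA0s hA00 hjumpf0
        hmin1 hmin2 hmax1 hmax2 hadm hεJpos (by rw [hεJ]; linarith)
        (by rw [hεJ]; linarith) (by rw [hεJ]; linarith)
        (by
          intro k h1 h2
          have := hgle k h1 h2
          simp only [hbgapf] at this
          rw [hεJ]
          linarith)
        hlid hlJ
    have hjc' : ∀ k, kmin < k → k ≤ kmax → |A n k - A0 k| ≤ m0 := by
      intro k h1 h2
      have := hjc k h1 h2
      rw [hεJ] at this
      linarith
    -- level closeness
    have hlev : ∀ k, kmin ≤ k → k ≤ kmax → |V n k - V0 k| ≤ εV := by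
      intro k h1 h2
      set L : ℝ := max (A0 k) (-C) with hL
      set R : ℝ := min (A0 (k+1)) C with hR
      have hgapLR : G ≤ R - L := by
        have := hGle k h1 h2
        simp only [hgapf] at this
        rw [hL, hR]
        linarith
      set t : ℝ := (L + R)/2 with ht
      have hLnC : -C ≤ L := le_max_right _ _
      have hRC : R ≤ C := min_le_right _ _
      have htmem : t ∈ Icc (-C) C := ⟨by rw [ht]; linarith, by rw [ht]; linarith⟩
      have hl't := hl'id t htmem
      rw [abs_le] at hl't
      have hA0kL : A0 k ≤ L := le_max_left _ _
      have hRA0k1 : R ≤ A0 (k+1) := min_le_left _ _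
      have h01 : A0 k ≤ l' t := by rw [ht] at hl't ⊢; linarith
      have h02 : l' t < A0 (k+1) := by rw [ht] at hl't ⊢; linarith
      have hval0' : ψ0 (l' t) = V0 k := hval0 k _ h01 h02
      have hn1 : A n k ≤ t := by
        by_cases hk : k = kmin
        · subst hk
          rw [ht]
          linarith
        · have := hjc' k (by omega) h2
          rw [abs_le] at this
          rw [ht]
          linarith
      have hn2 : t < A n (k+1) := by
        by_cases hk : k = kmax
        · subst hk
          have : t < R := by rw [ht]; linarith
          linarith
        · have := hjc' (k+1) (by omega) (by omega)
          rw [abs_le] at this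
          rw [ht]
          linarith
      have hvaln' : ψ n t = V n k := hvaln k t hn1 hn2
      have := hl'ψ t htmem
      rwa [hvaln', hval0'] at this
    have hVnstrict : ∀ k, kmin ≤ k → k ≤ kmax → k ≠ ks → V n k < V n ks := by
      intro k h1 h2 hne
      have h3 := hlev k h1 h2
      have h4 := hlev ks hks1 hks2
      have h5 := hδ k h1 h2 hne
      rw [abs_le] at h3 h4
      linarith
    have hiffn := maxpt_iff hC ⟨hAns, hAn0, htopn, hbotn, hvaln⟩ hnmin1 hnmin2
      hnmax1 hnmax2 hks1 hks2 hVnstrict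
    refine ⟨hiffn, ?_, ?_⟩
    · by_cases hk : ks = kmin
      · subst hk
        rw [max_eq_right hnmin1, max_eq_right hmin1]
        simpa using hε
      · have h1 := hjc' ks (by omega) hks2
        calc |max (A n ks) (-C) - max (A0 ks) (-C)| ≤ |A n ks - A0 ks| :=
              abs_max_sub_max_le_abs _ _ _
          _ ≤ m0 := h1
          _ < ε := by linarith
    · by_cases hk : ks = kmax
      · subst hk
        rw [min_eq_right hnmax2.le, min_eq_right hmax2.le]
        simpa using hε
      · have h1 := hjc' (ks+1) (by omega) (by omega)
        calc |min (A n (ks+1)) C - min (A0 (ks+1)) C| ≤ |A n (ks+1) - A0 (ks+1)| :=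
              abs_min_sub_min_le_abs' _ _ _
          _ ≤ m0 := h1
          _ < ε := by linarith
  constructor
  · intro x x0 hx hx0
    have hx0eq : x0 = max (A0 ks) (-C) :=
      le_antisymm (hx0.2 _ hx0max) ((hiff0 x0).1 hx0.1).1
    rw [Metric.tendsto_atTop]
    intro ε hε
    obtain ⟨N, hN⟩ := Filter.eventually_atTop.1 (key ε hε)
    refine ⟨N, fun n hn => ?_⟩
    obtain ⟨hiffn, hmaxclose, _⟩ := hN n hn
    have h1 := (hiffn (x n)).1 (hx n).1
    have hmaxn : IsMaxPtOn C (ψ n) (max (A n ks) (-C)) :=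
      (hiffn _).2 ⟨le_rfl, h1.1.trans h1.2⟩
    have hxneq : x n = max (A n ks) (-C) := le_antisymm ((hx n).2 _ hmaxn) h1.1
    rw [Real.dist_eq, hxneq, hx0eq]
    exact hmaxclose
  · intro x x0 hx hx0
    have hx0eq : x0 = min (A0 (ks+1)) C :=
      le_antisymm ((hiff0 x0).1 hx0.1).2 (hx0.2 _ hy0max)
    rw [Metric.tendsto_atTop]
    intro ε hε
    obtain ⟨N, hN⟩ := Filter.eventually_atTop.1 (key ε hε)
    refine ⟨N, fun n hn => ?_⟩
    obtain ⟨hiffn, _, hminclose⟩ := hN n hn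
    have h1 := (hiffn (x n)).1 (hx n).1
    have hminn : IsMaxPtOn C (ψ n) (min (A n (ks+1)) C) :=
      (hiffn _).2 ⟨h1.1.trans h1.2, le_rfl⟩
    have hxneq : x n = min (A n (ks+1)) C := le_antisymm h1.2 ((hx n).2 _ hminn)
    rw [Real.dist_eq, hxneq, hx0eq]
    exact hminclose
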